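/- For every θ ∈ (-π/2, π/2) and every real β > 1, with α± := -iβ sin θ ± √(β²-1) cos θ, one has sqrt↑(α₊ - i) · sqrt↑(α₋ - i) = -i(β + sin θ). -/

import Mathlib

open Complex Real

noncomputable def alphaP (β θ : ℝ) : ℂ :=
  -Complex.I * β * Real.sin θ + Real.sqrt (β ^ 2 - 1) * Real.cos θ

noncomputable def alphaM (β θ : ℝ) : ℂ :=
  -Complex.I * β * Real.sin θ - Real.sqrt (β ^ 2 - 1) * Real.cos θ

/-- Square root with branch cut along the positive imaginary axis:
sqrt↑(w) := e^{-iπ/4} (i w)^{1/2}, principal branch inside. -/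
noncomputable def sqrtUp (w : ℂ) : ℂ :=
  Complex.exp (-Complex.I * Real.pi / 4) * (Complex.I * w) ^ (1 / 2 : ℂ)

/-- For θ ∈ (-π/2, π/2) and β > 1, with α± = -iβ sin θ ± √(β²-1) cos θ,
one has sqrt↑(α₊ - i) · sqrt↑(α₋ - i) = -i(β + sin θ). -/
theorem stmt_2 (θ β : ℝ) (hθ : θ ∈ Set.Ioo (-(Real.pi / 2)) (Real.pi / 2))
    (hβ : 1 < β) :
    sqrtUp (alphaP β θ - Complex.I) * sqrtUp (alphaM β θ - Complex.I)
      = -Complex.I * ((β : ℂ) + (Real.sin θ : ℂ)) := by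
  have hcos : 0 < Real.cos θ := Real.cos_pos_of_mem_Ioo hθ
  have hsqp : 0 < Real.sqrt (β ^ 2 - 1) := Real.sqrt_pos.mpr (by nlinarith)
  set a : ℝ := β * Real.sin θ + 1 with ha
  set b : ℝ := Real.sqrt (β ^ 2 - 1) * Real.cos θ with hb
  have hbpos : 0 < b := mul_pos hsqp hcos
  set z : ℂ := (a : ℂ) + (b : ℂ) * Complex.I with hz
  have hzim : z.im = b := by simp [hz]
  have harg : z.arg ≠ Real.pi := by
    intro h
    have h2 := (Complex.arg_eq_pi_iff.mp h).2
    rw [hzim] at h2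
    exact hbpos.ne' h2
  have h1 : Complex.I * (alphaP β θ - Complex.I) = z := by
    simp only [alphaP, hz, ha, hb]
    push_cast [Complex.ofReal_sin, Complex.ofReal_cos]
    linear_combination (-(β : ℂ) * Complex.sin (θ : ℂ) - 1) * Complex.I_sq
  have h2 : Complex.I * (alphaM β θ - Complex.I) = (starRingEnd ℂ) z := by
    have : (starRingEnd ℂ) z = (a : ℂ) - (b : ℂ) * Complex.I := by
      simp [hz, Complex.conj_ofReal]
      ring
    rw [this]
    simp only [alphaM, ha, hb]
    push_cast [Complex.ofReal_sin, Complex.ofReal_cos]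
    linear_combination (-(β : ℂ) * Complex.sin (θ : ℂ) - 1) * Complex.I_sq
  have hconj : ((starRingEnd ℂ) z) ^ (1/2 : ℂ) = (starRingEnd ℂ) (z ^ (1/2 : ℂ)) := by
    have hhalf : (starRingEnd ℂ) (1/2 : ℂ) = 1/2 := by rw [map_div₀, map_one, map_ofNat]
    rw [Complex.conj_cpow z (1/2) harg, hhalf]
  have hexp : Complex.exp (-Complex.I * Real.pi / 4) * Complex.exp (-Complex.I * Real.pi / 4)
      = -Complex.I := by
    rw [← Complex.exp_add]
    have : -Complex.I * (Real.pi : ℂ) / 4 + -Complex.I * (Real.pi : ℂ) / 4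
        = ((-(Real.pi/2) : ℝ) : ℂ) * Complex.I := by push_cast; ring
    rw [this, Complex.exp_mul_I]
    push_cast
    simp [Real.cos_pi_div_two, Real.sin_pi_div_two]
  have habs : ‖z‖ = β + Real.sin θ := by
    have hnormSq : Complex.normSq z = (β + Real.sin θ) ^ 2 := by
      have hb2 : b ^ 2 = (β ^ 2 - 1) * Real.cos θ ^ 2 := by
        rw [hb, mul_pow, Real.sq_sqrt (by nlinarith : (0:ℝ) ≤ β ^ 2 - 1)]
      have hpyth := Real.sin_sq_add_cos_sq θ
      simp only [hz]
      rw [Complex.normSq_add_mul_I]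
      nlinarith [hb2, hpyth]
    rw [Complex.norm_def, hnormSq, Real.sqrt_sq (by nlinarith [Real.neg_one_le_sin θ])]
  have hmul : z ^ (1/2 : ℂ) * (starRingEnd ℂ) (z ^ (1/2 : ℂ))
      = ((β + Real.sin θ : ℝ) : ℂ) := by
    rw [Complex.mul_conj, Complex.normSq_eq_norm_sq]
    have : (1/2 : ℂ) = ((1/2 : ℝ) : ℂ) := by norm_num
    rw [this, Complex.norm_cpow_real, habs]
    norm_cast
    rw [← Real.rpow_natCast (_ ^ _) 2, ← Real.rpow_mul (by nlinarith [Real.neg_one_le_sin θ])]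
    norm_num
  calc sqrtUp (alphaP β θ - Complex.I) * sqrtUp (alphaM β θ - Complex.I)
      = (Complex.exp (-Complex.I * Real.pi / 4) * Complex.exp (-Complex.I * Real.pi / 4)) *
        ((Complex.I * (alphaP β θ - Complex.I)) ^ (1/2 : ℂ) *
         (Complex.I * (alphaM β θ - Complex.I)) ^ (1/2 : ℂ)) := by
        simp only [sqrtUp]; ring
    _ = -Complex.I * (z ^ (1/2 : ℂ) * (starRingEnd ℂ) (z ^ (1/2 : ℂ))) := by
        rw [h1, h2, hconj, hexp]
    _ = -Complex.I * ((β : ℂ) + (Real.sin θ : ℂ)) := by rw [hmul]; push_cast; ring
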